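/- If the outcome model is correctly specified, i.e. Q̂¹(W) = E[Y|A=1,W] almost surely, then for any measurable ĥ¹ bounded away from 0, E[A(Y - Q̂¹(W))/ĥ¹(W)] = 0, and hence the nAIPW population functional E[A(Y-Q̂¹)/(ĝ·E[A/ĝ])] + E[Q̂¹] equals E[E[Y|A=1,W]]. -/

import Mathlib

open MeasureTheory

lemma aux_zero {Ω β : Type*} [MeasurableSpace β]
    {mΩ : MeasurableSpace Ω} {μ : Measure Ω} [IsProbabilityMeasure μ]
    (W : Ω → β) (hW : Measurable W)
    (A : Ω → ℝ) (hAmeas : Measurable A) (hA01 : ∀ ω, A ω = 0 ∨ A ω = 1)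
    (Y : Ω → ℝ) (hY : Integrable Y μ)
    (Q1 Q0 : β → ℝ) (hQ1 : Measurable Q1) (hQ0 : Measurable Q0)
    (hcondY : μ[Y | MeasurableSpace.comap (fun ω => (A ω, W ω)) inferInstance]
      =ᵐ[μ] fun ω => A ω * Q1 (W ω) + (1 - A ω) * Q0 (W ω))
    (h1 : β → ℝ) (hh1 : Measurable h1)
    (c : ℝ) (hc : 0 < c) (hh1bdd : ∀ b, c ≤ h1 b)
    (hintQ1 : Integrable (fun ω => Q1 (W ω)) μ) :
    (∫ ω, A ω * (Y ω - Q1 (W ω)) / h1 (W ω) ∂μ) = 0 := by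
  set m : MeasurableSpace Ω := MeasurableSpace.comap (fun ω => (A ω, W ω)) inferInstance with hmdef
  have hm : m ≤ mΩ := measurable_iff_comap_le.mp (hAmeas.prodMk hW)
  have hφ : Measurable[m] (fun ω => (A ω, W ω)) := measurable_iff_comap_le.mpr le_rfl
  have hA' : Measurable[m] A := measurable_fst.comp hφ
  have hW' : Measurable[m] W := measurable_snd.comp hφ
  have hne : ∀ b, h1 b ≠ 0 := fun b => ne_of_gt (lt_of_lt_of_le hc (hh1bdd b))
  set f : Ω → ℝ := fun ω => A ω / h1 (W ω) with hfdef
  have hf : StronglyMeasurable[m] f := (hA'.div (hh1.comp hW')).stronglyMeasurable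
  have hfm : Measurable[mΩ] f := hAmeas.div (hh1.comp hW)
  have hfbound : ∀ ω, ‖f ω‖ ≤ 1 / c := by
    intro ω
    rcases hA01 ω with h | h
    · simp [hfdef, h]
      positivity
    · have h0 : (0:ℝ) < h1 (W ω) := lt_of_lt_of_le hc (hh1bdd _)
      simp only [hfdef, h, one_div, Real.norm_eq_abs]
      rw [abs_of_nonneg (by positivity)]
      exact inv_anti₀ hc (hh1bdd _)
  have hfY : Integrable (fun ω => f ω * Y ω) μ :=
    hY.bdd_mul hfm.aestronglyMeasurable (Filter.Eventually.of_forall hfbound)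
  have hfQ : Integrable (fun ω => f ω * Q1 (W ω)) μ :=
    hintQ1.bdd_mul hfm.aestronglyMeasurable (Filter.Eventually.of_forall hfbound)
  have hmul : μ[f * Y | m] =ᵐ[μ] f * μ[Y | m] :=
    condExp_stronglyMeasurable_mul_of_bound hm hf hY (1 / c) (Filter.Eventually.of_forall hfbound)
  have key : ∫ ω, f ω * Y ω ∂μ = ∫ ω, f ω * Q1 (W ω) ∂μ := by
    have h1' : ∫ ω, f ω * Y ω ∂μ = ∫ ω, (μ[f * Y | m]) ω ∂μ := (integral_condExp hm).symm
    have h2' : ∫ ω, (μ[f * Y | m]) ω ∂μ = ∫ ω, f ω * (μ[Y | m]) ω ∂μ :=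
      integral_congr_ae hmul
    have h3' : ∫ ω, f ω * (μ[Y | m]) ω ∂μ
        = ∫ ω, f ω * (A ω * Q1 (W ω) + (1 - A ω) * Q0 (W ω)) ∂μ := by
      refine integral_congr_ae ?_
      filter_upwards [hcondY] with ω hω
      rw [hω]
    have h4' : ∀ ω, f ω * (A ω * Q1 (W ω) + (1 - A ω) * Q0 (W ω)) = f ω * Q1 (W ω) := by
      intro ω
      rcases hA01 ω with h | h <;> simp [hfdef, h]
    rw [h1', h2', h3']
    exact integral_congr_ae (Filter.Eventually.of_forall h4')
  have hpt : ∀ ω, A ω * (Y ω - Q1 (W ω)) / h1 (W ω) = f ω * Y ω - f ω * Q1 (W ω) := by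
    intro ω
    field_simp [hfdef]
    ring
  calc ∫ ω, A ω * (Y ω - Q1 (W ω)) / h1 (W ω) ∂μ
      = ∫ ω, (f ω * Y ω - f ω * Q1 (W ω)) ∂μ :=
        integral_congr_ae (Filter.Eventually.of_forall hpt)
    _ = (∫ ω, f ω * Y ω ∂μ) - ∫ ω, f ω * Q1 (W ω) ∂μ := integral_sub hfY hfQ
    _ = 0 := by rw [key]; ring

/-- If the outcome model is correctly specified (Q̂¹(W) = E[Y|A=1,W] a.s.), then for any
measurable ĥ¹ bounded away from 0, E[A(Y - Q̂¹(W))/ĥ¹(W)] = 0, and hence the nAIPW population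
functional E[A(Y-Q̂¹)/(ĝ·E[A/ĝ])] + E[Q̂¹] equals E[E[Y|A=1,W]] = E[Q¹(W)]. -/
theorem stmt_6 {Ω β : Type*} [MeasurableSpace β]
    {mΩ : MeasurableSpace Ω} {μ : Measure Ω} [IsProbabilityMeasure μ]
    (W : Ω → β) (hW : Measurable W)
    (A : Ω → ℝ) (hAmeas : Measurable A) (hA01 : ∀ ω, A ω = 0 ∨ A ω = 1)
    (Y : Ω → ℝ) (hY : Integrable Y μ)
    (Q1 Q0 : β → ℝ) (hQ1 : Measurable Q1) (hQ0 : Measurable Q0)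
    (hcondY : μ[Y | MeasurableSpace.comap (fun ω => (A ω, W ω)) inferInstance]
      =ᵐ[μ] fun ω => A ω * Q1 (W ω) + (1 - A ω) * Q0 (W ω))
    (Qhat : β → ℝ) (hQhatMeas : Measurable Qhat)
    (hQhatCorrect : (fun ω => Qhat (W ω)) =ᵐ[μ] fun ω => Q1 (W ω))
    (h1 : β → ℝ) (hh1 : Measurable h1)
    (c : ℝ) (hc : 0 < c) (hh1bdd : ∀ b, c ≤ h1 b)
    (ghat : β → ℝ) (hghat : Measurable ghat) (hghatbdd : ∀ b, c ≤ ghat b ∧ ghat b ≤ 1 - c)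
    (hintQ1 : Integrable (fun ω => Q1 (W ω)) μ)
    (hintQhat : Integrable (fun ω => Qhat (W ω)) μ) :
    (∫ ω, A ω * (Y ω - Qhat (W ω)) / h1 (W ω) ∂μ) = 0
    ∧ (∫ ω, A ω * (Y ω - Qhat (W ω)) / (ghat (W ω) * ∫ ω', A ω' / ghat (W ω') ∂μ) ∂μ)
        + ∫ ω, Qhat (W ω) ∂μ
      = ∫ ω, Q1 (W ω) ∂μ := by
  have hQint : ∫ ω, Qhat (W ω) ∂μ = ∫ ω, Q1 (W ω) ∂μ := integral_congr_ae hQhatCorrect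
  have hzero : ∀ (h : β → ℝ), Measurable h → ∀ c' : ℝ, 0 < c' → (∀ b, c' ≤ h b) →
      (∫ ω, A ω * (Y ω - Qhat (W ω)) / h (W ω) ∂μ) = 0 := by
    intro h hh c' hc' hbd
    have : (∫ ω, A ω * (Y ω - Qhat (W ω)) / h (W ω) ∂μ)
        = ∫ ω, A ω * (Y ω - Q1 (W ω)) / h (W ω) ∂μ := by
      refine integral_congr_ae ?_
      filter_upwards [hQhatCorrect] with ω hω
      rw [hω]
    rw [this]
    exact aux_zero W hW A hAmeas hA01 Y hY Q1 Q0 hQ1 hQ0 hcondY h hh c' hc' hbd hintQ1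
  refine ⟨hzero h1 hh1 c hc hh1bdd, ?_⟩
  set K : ℝ := ∫ ω', A ω' / ghat (W ω') ∂μ with hK
  by_cases hK0 : K = 0
  · have : (∫ ω, A ω * (Y ω - Qhat (W ω)) / (ghat (W ω) * K) ∂μ) = 0 := by
      simp [hK0]
    rw [this, zero_add, hQint]
  · have hKnonneg : 0 ≤ K := by
      refine integral_nonneg fun ω => ?_
      have h0 : (0:ℝ) < ghat (W ω) := lt_of_lt_of_le hc (hghatbdd _).1
      rcases hA01 ω with h | h <;> simp [h] <;> positivity
    have hKpos : 0 < K := lt_of_le_of_ne hKnonneg (Ne.symm hK0)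
    have := hzero (fun b => ghat b * K) (hghat.mul_const K) (c * K)
      (mul_pos hc hKpos) (fun b => mul_le_mul_of_nonneg_right (hghatbdd b).1 hKnonneg)
    rw [this, zero_add, hQint]
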